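/- Let M be an infinite pointed metric space whose set of cluster points M' is infinite. Then Lip₀(M) contains a sequence equivalent to the canonical basis of c₀. Concretely: there exist pairwise disjoint balls B(xₙ, rₙ) with xₙ ∈ M' and norm-one Lipschitz functions fₙ supported in B(xₙ, rₙ) such that (fₙ) is equivalent to the c₀ basis in Lip₀(M). -/
import Mathlib


open Filter Topology

/-- The Lipschitz norm (best Lipschitz constant) of a function on a metric space. -/
noncomputable def lipNorm {M : Type*} [MetricSpace M] (f : M → ℝ) : ℝ :=
  sSup {r : ℝ | ∃ x y : M, x ≠ y ∧ r = |f x - f y| / dist x y}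

/-- The set of cluster (accumulation) points of a metric space. -/
def clusterPts (M : Type*) [MetricSpace M] : Set M :=
  {p : M | ∀ ε : ℝ, 0 < ε → ∃ q : M, q ≠ p ∧ dist q p < ε}

lemma lipNorm_nonneg {M : Type*} [MetricSpace M] (f : M → ℝ) : 0 ≤ lipNorm f := by
  apply Real.sSup_nonneg
  rintro r ⟨a, b, hab, rfl⟩
  positivity

lemma lipNorm_le {M : Type*} [MetricSpace M] {f : M → ℝ} {C : ℝ} (hC : 0 ≤ C)
    (h : ∀ a b : M, |f a - f b| ≤ C * dist a b) : lipNorm f ≤ C := by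
  apply Real.sSup_le _ hC
  rintro r ⟨a, b, hab, rfl⟩
  rw [div_le_iff₀ (dist_pos.2 hab)]
  exact h a b

lemma le_lipNorm {M : Type*} [MetricSpace M] {f : M → ℝ} {C : ℝ}
    (h : ∀ a b : M, |f a - f b| ≤ C * dist a b) (a b : M) (hab : a ≠ b) :
    |f a - f b| / dist a b ≤ lipNorm f := by
  refine le_csSup ⟨C, ?_⟩ ⟨a, b, hab, rfl⟩
  rintro r ⟨u, v, huv, rfl⟩
  rw [div_le_iff₀ (dist_pos.2 huv)]
  exact h u v

lemma exists_disjoint_balls {M : Type*} [MetricSpace M] {S : Set M} (hS : S.Infinite) :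
    ∃ (x : ℕ → M) (s : ℕ → ℝ), (∀ n, x n ∈ S) ∧ (∀ n, 0 < s n) ∧
      Pairwise fun n m => Disjoint (Metric.ball (x n) (s n)) (Metric.ball (x m) (s m)) := by
  by_cases h : ∃ q : M, ∀ ε : ℝ, 0 < ε → ∃ p, p ∈ S ∧ p ≠ q ∧ dist p q < ε
  · obtain ⟨q, hq⟩ := h
    have pos : ∀ p : M, p ≠ q → 0 < dist p q / 4 := fun p hp => by
      have := dist_pos.2 hp; linarith
    have Fex : ∀ t : {p : M // p ∈ S ∧ p ≠ q},
        ∃ t' : {p : M // p ∈ S ∧ p ≠ q}, dist t'.1 q < dist t.1 q / 4 := by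
      intro t
      obtain ⟨p', h1, h2, h3⟩ := hq _ (pos t.1 t.2.2)
      exact ⟨⟨p', h1, h2⟩, h3⟩
    choose F hF using Fex
    obtain ⟨p0, hp0S, hp0q, -⟩ := hq 1 one_pos
    set X : ℕ → {p : M // p ∈ S ∧ p ≠ q} := fun n => F^[n] ⟨p0, hp0S, hp0q⟩ with hX
    have hsucc : ∀ n, dist (X (n+1)).1 q < dist (X n).1 q / 4 := by
      intro n
      have hstep : X (n+1) = F (X n) := by
        simp only [hX, Function.iterate_succ_apply']
      rw [hstep]; exact hF _
    have hmono : ∀ n m, n < m → dist (X m).1 q ≤ dist (X n).1 q / 4 := by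
      intro n m hnm
      induction m with
      | zero => omega
      | succ m ih =>
        rcases Nat.lt_succ_iff_lt_or_eq.1 hnm with h' | h'
        · have h1 := hsucc m
          have h2 := ih h'
          have h0 : (0:ℝ) ≤ dist (X n).1 q := dist_nonneg
          linarith
        · subst h'; exact (hsucc n).le
    refine ⟨fun n => (X n).1, fun n => dist (X n).1 q / 4, fun n => (X n).2.1,
      fun n => pos _ (X n).2.2, ?_⟩
    have key : ∀ n m, n < m →
        Disjoint (Metric.ball (X n).1 (dist (X n).1 q / 4))
          (Metric.ball (X m).1 (dist (X m).1 q / 4)) := by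
      intro n m h'
      apply Metric.ball_disjoint_ball
      have h1 := hmono n m h'
      have h2 := dist_triangle (X n).1 (X m).1 q
      have h3 : (0:ℝ) ≤ dist (X m).1 q := dist_nonneg
      linarith
    intro n m hnm
    rcases lt_or_gt_of_ne hnm with h' | h'
    · exact key n m h'
    · exact (key m n h').symm
  · push_neg at h
    choose ε hε hsep using h
    set e : ℕ ↪ S := Set.Infinite.natEmbedding S hS with he
    set x : ℕ → M := fun n => (e n).1 with hx
    have hxS : ∀ n, x n ∈ S := fun n => (e n).2
    have hxinj : Function.Injective x := fun n m hnm => by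
      have := e.injective (Subtype.ext hnm)
      exact this
    refine ⟨x, fun n => ε (x n) / 2, hxS, fun n => by have := hε (x n); linarith, ?_⟩
    intro n m hnm
    apply Metric.ball_disjoint_ball
    have h1 : ε (x n) ≤ dist (x m) (x n) :=
      hsep (x n) (x m) (hxS m) (fun e => hnm (hxinj e).symm)
    have h2 : ε (x m) ≤ dist (x n) (x m) :=
      hsep (x m) (x n) (hxS n) (fun e => hnm.symm (hxinj e).symm)
    rw [dist_comm] at h1
    linarith

/-- If the set of cluster points of a pointed metric space `M` is infinite, then
`Lip₀(M)` contains a sequence equivalent to the `c₀` basis: there are pairwise disjoint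
balls `B(xₙ, rₙ)` centered at cluster points and norm-one Lipschitz functions `fₙ`
supported in `B(xₙ, rₙ)` forming a sequence equivalent to the `c₀` basis. -/
theorem stmt18 {M : Type*} [MetricSpace M] (base : M)
    (hM : (clusterPts M).Infinite) :
    ∃ (x : ℕ → M) (r : ℕ → ℝ) (f : ℕ → M → ℝ),
      (∀ n, x n ∈ clusterPts M) ∧ (∀ n, 0 < r n) ∧
      (Pairwise fun n m => Disjoint (Metric.ball (x n) (r n)) (Metric.ball (x m) (r m))) ∧
      (∀ n, LipschitzWith 1 (f n)) ∧ (∀ n, f n base = 0) ∧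
      (∀ n, lipNorm (f n) = 1) ∧
      (∀ n, ∀ p ∉ Metric.ball (x n) (r n), f n p = 0) ∧
      ∃ a b : ℝ, 0 < a ∧ a ≤ b ∧ ∀ (N : ℕ) (l : Fin N → ℝ),
        a * (⨆ i, |l i|) ≤ lipNorm (fun p => ∑ i, l i * f (i : ℕ) p) ∧
        lipNorm (fun p => ∑ i, l i * f (i : ℕ) p) ≤ b * (⨆ i, |l i|) := by
  have hS : (clusterPts M \ {base}).Infinite := hM.diff (Set.finite_singleton base)
  obtain ⟨x, s, hxS, hs, hdisj⟩ := exists_disjoint_balls hS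
  have hxc : ∀ n, x n ∈ clusterPts M := fun n => (hxS n).1
  have hxb : ∀ n, x n ≠ base := fun n => (hxS n).2
  -- shrink radii to also avoid the base point
  set t : ℕ → ℝ := fun n => min (s n) (dist (x n) base) with ht
  have htpos : ∀ n, 0 < t n := fun n =>
    lt_min (hs n) (dist_pos.2 (hxb n))
  have htdisj : Pairwise fun n m =>
      Disjoint (Metric.ball (x n) (t n)) (Metric.ball (x m) (t m)) := by
    intro n m hnm
    exact (hdisj hnm).mono (Metric.ball_subset_ball (min_le_left _ _))
      (Metric.ball_subset_ball (min_le_left _ _))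
  -- distance between centers
  have hcent : ∀ n m, n ≠ m → max (t n) (t m) ≤ dist (x n) (x m) := by
    intro n m hnm
    rw [max_le_iff]
    constructor
    · by_contra hlt
      push_neg at hlt
      exact (htdisj hnm).ne_of_mem (Metric.mem_ball.2 (by rwa [dist_comm]))
        (Metric.mem_ball_self (htpos m)) rfl
    · by_contra hlt
      push_neg at hlt
      exact (htdisj hnm).ne_of_mem (Metric.mem_ball_self (htpos n))
        (Metric.mem_ball.2 (by rwa [dist_comm] at hlt ⊢)) rfl
  set r : ℕ → ℝ := fun n => t n / 3 with hr
  have hrpos : ∀ n, 0 < r n := fun n => by have := htpos n; simp only [hr]; linarith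
  set f : ℕ → M → ℝ := fun n p => max 0 (r n / 2 - dist p (x n)) with hf
  -- basic properties of f
  have hf_le : ∀ n p, f n p ≤ r n / 2 := by
    intro n p
    simp only [hf, max_le_iff]
    constructor
    · linarith [hrpos n]
    · have := dist_nonneg (x := p) (y := x n); linarith
  have hf_nonneg : ∀ n p, 0 ≤ f n p := fun n p => le_max_left _ _
  have hf_zero : ∀ n p, r n / 2 ≤ dist p (x n) → f n p = 0 := by
    intro n p hp
    simp only [hf, max_eq_left_iff]
    linarith
  have hf_pos_dist : ∀ n p, f n p ≠ 0 → dist p (x n) < r n / 2 := by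
    intro n p hp
    by_contra hle
    push_neg at hle
    exact hp (hf_zero n p hle)
  have hf_center : ∀ n, f n (x n) = r n / 2 := by
    intro n
    simp only [hf, dist_self]
    rw [max_eq_right (by linarith [hrpos n])]
    ring
  have hlip' : ∀ n (a b : M), |f n a - f n b| ≤ dist a b := by
    intro n a b
    have hfa : f n a = max (r n / 2 - dist a (x n)) 0 := by simp only [hf]; rw [max_comm]
    have hfb : f n b = max (r n / 2 - dist b (x n)) 0 := by simp only [hf]; rw [max_comm]
    rw [hfa, hfb]
    calc |max (r n / 2 - dist a (x n)) 0 - max (r n / 2 - dist b (x n)) 0|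
        ≤ |(r n / 2 - dist a (x n)) - (r n / 2 - dist b (x n))| :=
          abs_max_sub_max_le_abs _ _ _
      _ = |dist b (x n) - dist a (x n)| := by ring_nf
      _ ≤ dist b a := abs_dist_sub_le _ _ _
      _ = dist a b := dist_comm _ _
  have hlip : ∀ n, LipschitzWith 1 (f n) := by
    intro n
    apply LipschitzWith.of_dist_le_mul
    intro a b
    simpa [Real.dist_eq] using hlip' n a b
  -- support in ball of radius r n
  have hsupp : ∀ n, ∀ p ∉ Metric.ball (x n) (r n), f n p = 0 := by
    intro n p hp
    apply hf_zero
    rw [Metric.mem_ball, not_lt] at hp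
    linarith [hrpos n]
  -- f vanishes at base
  have hbase : ∀ n, f n base = 0 := by
    intro n
    apply hf_zero
    have h1 : t n ≤ dist (x n) base := min_le_right _ _
    rw [dist_comm]
    have := htpos n
    simp only [hr]
    linarith
  -- if f n p ≠ 0 and m ≠ n then f m p = 0
  have hdisj_supp : ∀ n m p, n ≠ m → f n p ≠ 0 → f m p = 0 := by
    intro n m p hnm hp
    have h1 := hf_pos_dist n p hp
    apply hf_zero
    by_contra hlt
    push_neg at hlt
    have hpn : p ∈ Metric.ball (x n) (t n) := by
      rw [Metric.mem_ball]
      have := htpos n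
      simp only [hr] at h1
      linarith
    have hpm : p ∈ Metric.ball (x m) (t m) := by
      rw [Metric.mem_ball]
      have := htpos m
      simp only [hr] at hlt
      linarith
    exact (htdisj hnm).ne_of_mem hpn hpm rfl
  -- cluster point gives nearby points
  have hnear : ∀ n (ε : ℝ), 0 < ε → ∃ q : M, q ≠ x n ∧ dist q (x n) < ε :=
    fun n ε hε => hxc n ε hε
  refine ⟨x, r, f, hxc, hrpos, ?_, hlip, hbase, ?_, hsupp, 1, 1, one_pos, le_rfl, ?_⟩
  · -- pairwise disjoint r-balls
    intro n m hnm
    exact (htdisj hnm).mono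
      (Metric.ball_subset_ball (by have := htpos n; simp only [hr]; linarith))
      (Metric.ball_subset_ball (by have := htpos m; simp only [hr]; linarith))
  · -- lipNorm (f n) = 1
    intro n
    apply le_antisymm
    · exact lipNorm_le zero_le_one (fun a b => by rw [one_mul]; exact hlip' n a b)
    · obtain ⟨q, hq1, hq2⟩ := hnear n (r n / 2) (by linarith [hrpos n])
      have hfq : f n q = r n / 2 - dist q (x n) := by
        simp only [hf]
        rw [max_eq_right (by linarith)]
      have hdq : 0 < dist q (x n) := dist_pos.2 hq1
      have : |f n q - f n (x n)| / dist q (x n) = 1 := by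
        rw [hfq, hf_center n]
        rw [show r n / 2 - dist q (x n) - r n / 2 = -(dist q (x n)) by ring]
        rw [abs_neg, abs_of_pos hdq]
        field_simp
      calc (1:ℝ) = |f n q - f n (x n)| / dist q (x n) := this.symm
        _ ≤ lipNorm (f n) := le_lipNorm (C := 1) (fun a b => by rw [one_mul]; exact hlip' n a b) q (x n) hq1
  · -- c₀ equivalence with a = b = 1
    intro N l
    set L : ℝ := ⨆ i, |l i| with hL
    have hL0 : 0 ≤ L := Real.iSup_nonneg (fun i => abs_nonneg _)
    have hlL : ∀ i : Fin N, |l i| ≤ L :=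
      fun i => le_ciSup (f := fun i => |l i|) (Set.Finite.bddAbove (Set.finite_range _)) i
    set g : M → ℝ := fun p => ∑ i : Fin N, l i * f (i : ℕ) p with hg
    -- sum collapses to a single term
    have hsum : ∀ (p : M) (i : Fin N), f (i : ℕ) p ≠ 0 → g p = l i * f (i : ℕ) p := by
      intro p i hi
      simp only [hg]
      apply Finset.sum_eq_single i
      · intro j _ hji
        have : f (j : ℕ) p = 0 :=
          hdisj_supp (i : ℕ) (j : ℕ) p (fun e => hji (Fin.ext e.symm)) hi
        rw [this, mul_zero]
      · intro hi'
        exact absurd (Finset.mem_univ i) hi'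
    have hsum0 : ∀ p : M, (∀ i : Fin N, f (i : ℕ) p = 0) → g p = 0 := by
      intro p hp
      simp only [hg]
      apply Finset.sum_eq_zero
      intro i _
      rw [hp i, mul_zero]
    -- pointwise Lipschitz estimate for g
    have hkey : ∀ a b : M, |g a - g b| ≤ L * dist a b := by
      intro a b
      by_cases hA : ∃ i : Fin N, f (i : ℕ) a ≠ 0
      · obtain ⟨i, hi⟩ := hA
        by_cases hB : ∃ j : Fin N, f (j : ℕ) b ≠ 0
        · obtain ⟨j, hj⟩ := hB
          by_cases hij : i = j
          · subst hij
            rw [hsum a i hi, hsum b i hj, ← mul_sub, abs_mul]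
            calc |l i| * |f (i:ℕ) a - f (i:ℕ) b| ≤ |l i| * dist a b :=
                  mul_le_mul_of_nonneg_left (hlip' _ a b) (abs_nonneg _)
              _ ≤ L * dist a b := mul_le_mul_of_nonneg_right (hlL i) dist_nonneg
          · -- different supports: use separation of the balls
            have hia := hf_pos_dist (i:ℕ) a hi
            have hjb := hf_pos_dist (j:ℕ) b hj
            have hij' : (i:ℕ) ≠ (j:ℕ) := fun e => hij (Fin.ext e)
            have hc := hcent (i:ℕ) (j:ℕ) hij'
            have hmax : max (t (i:ℕ)) (t (j:ℕ)) ≤ dist (x (i:ℕ)) (x (j:ℕ)) := hc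
            have hti : t (i:ℕ) ≤ max (t (i:ℕ)) (t (j:ℕ)) := le_max_left _ _
            have htj : t (j:ℕ) ≤ max (t (i:ℕ)) (t (j:ℕ)) := le_max_right _ _
            have htri : dist (x (i:ℕ)) (x (j:ℕ)) ≤ dist a (x (i:ℕ)) + dist a b + dist b (x (j:ℕ)) := by
              calc dist (x (i:ℕ)) (x (j:ℕ)) ≤ dist (x (i:ℕ)) a + dist a (x (j:ℕ)) :=
                    dist_triangle _ _ _
                _ ≤ dist (x (i:ℕ)) a + (dist a b + dist b (x (j:ℕ))) := by
                    linarith [dist_triangle a b (x (j:ℕ))]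
                _ = dist a (x (i:ℕ)) + dist a b + dist b (x (j:ℕ)) := by
                    rw [dist_comm (x (i:ℕ)) a]; ring
            -- r = t/3, dist a (x i) < t i / 6, dist b (x j) < t j / 6
            have hri : dist a (x (i:ℕ)) < t (i:ℕ) / 6 := by
              simp only [hr] at hia; linarith
            have hrj : dist b (x (j:ℕ)) < t (j:ℕ) / 6 := by
              simp only [hr] at hjb; linarith
            have hd : max (t (i:ℕ)) (t (j:ℕ)) / 2 ≤ dist a b := by
              have h1 : t (i:ℕ) / 6 ≤ max (t (i:ℕ)) (t (j:ℕ)) / 6 := by linarith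
              have h2 : t (j:ℕ) / 6 ≤ max (t (i:ℕ)) (t (j:ℕ)) / 6 := by linarith
              have h0 := htpos (i:ℕ)
              linarith
            rw [hsum a i hi, hsum b j hj]
            have hfa : f (i:ℕ) a ≤ t (i:ℕ) / 6 := by
              have := hf_le (i:ℕ) a; simp only [hr] at this; linarith
            have hfb : f (j:ℕ) b ≤ t (j:ℕ) / 6 := by
              have := hf_le (j:ℕ) b; simp only [hr] at this; linarith
            calc |l i * f (i:ℕ) a - l j * f (j:ℕ) b|
                ≤ |l i * f (i:ℕ) a| + |l j * f (j:ℕ) b| := abs_sub _ _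
              _ = |l i| * f (i:ℕ) a + |l j| * f (j:ℕ) b := by
                  rw [abs_mul, abs_mul, abs_of_nonneg (hf_nonneg _ a),
                    abs_of_nonneg (hf_nonneg _ b)]
              _ ≤ L * f (i:ℕ) a + L * f (j:ℕ) b := by
                  have := hf_nonneg (i:ℕ) a
                  have := hf_nonneg (j:ℕ) b
                  have h1 := hlL i
                  have h2 := hlL j
                  nlinarith
              _ ≤ L * (t (i:ℕ) / 6) + L * (t (j:ℕ) / 6) := by nlinarith
              _ ≤ L * (max (t (i:ℕ)) (t (j:ℕ)) / 6) + L * (max (t (i:ℕ)) (t (j:ℕ)) / 6) := by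
                  nlinarith
              _ = L * (max (t (i:ℕ)) (t (j:ℕ)) / 3) := by ring
              _ ≤ L * dist a b := by nlinarith [htpos (i:ℕ), htpos (j:ℕ)]
        · push_neg at hB
          rw [hsum a i hi, hsum0 b hB, sub_zero, abs_mul]
          have : f (i:ℕ) b = 0 := hB i
          calc |l i| * |f (i:ℕ) a| = |l i| * |f (i:ℕ) a - f (i:ℕ) b| := by rw [this, sub_zero]
            _ ≤ |l i| * dist a b := mul_le_mul_of_nonneg_left (hlip' _ a b) (abs_nonneg _)
            _ ≤ L * dist a b := mul_le_mul_of_nonneg_right (hlL i) dist_nonneg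
      · push_neg at hA
        by_cases hB : ∃ j : Fin N, f (j : ℕ) b ≠ 0
        · obtain ⟨j, hj⟩ := hB
          rw [hsum0 a hA, hsum b j hj, zero_sub, abs_neg, abs_mul]
          have : f (j:ℕ) a = 0 := hA j
          calc |l j| * |f (j:ℕ) b| = |l j| * |f (j:ℕ) b - f (j:ℕ) a| := by rw [this, sub_zero]
            _ ≤ |l j| * dist b a := mul_le_mul_of_nonneg_left (hlip' _ b a) (abs_nonneg _)
            _ = |l j| * dist a b := by rw [dist_comm]
            _ ≤ L * dist a b := mul_le_mul_of_nonneg_right (hlL j) dist_nonneg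
        · push_neg at hB
          rw [hsum0 a hA, hsum0 b hB, sub_zero, abs_zero]
          positivity
    constructor
    · -- lower bound
      rw [one_mul]
      rcases Nat.eq_zero_or_pos N with hN | hN
      · subst hN
        have : L = 0 := Real.iSup_of_isEmpty _
        rw [this]
        exact lipNorm_nonneg _
      · have : Nonempty (Fin N) := ⟨⟨0, hN⟩⟩
        apply ciSup_le
        intro i
        obtain ⟨q, hq1, hq2⟩ := hnear (i:ℕ) (r (i:ℕ) / 2) (by linarith [hrpos (i:ℕ)])
        have hfq : f (i:ℕ) q = r (i:ℕ) / 2 - dist q (x (i:ℕ)) := by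
          simp only [hf]
          rw [max_eq_right (by linarith)]
        have hdq : 0 < dist q (x (i:ℕ)) := dist_pos.2 hq1
        have hfq_ne : f (i:ℕ) q ≠ 0 := by rw [hfq]; intro e; linarith
        have hfx_ne : f (i:ℕ) (x (i:ℕ)) ≠ 0 := by
          rw [hf_center]; intro e; have := hrpos (i:ℕ); linarith
        have hgval : |g q - g (x (i:ℕ))| = |l i| * dist q (x (i:ℕ)) := by
          rw [hsum q i hfq_ne, hsum (x (i:ℕ)) i hfx_ne, ← mul_sub, abs_mul,
            hfq, hf_center]
          congr 1
          rw [show r (i:ℕ) / 2 - dist q (x (i:ℕ)) - r (i:ℕ) / 2 = -(dist q (x (i:ℕ))) by ring,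
            abs_neg, abs_of_pos hdq]
        have : |l i| = |g q - g (x (i:ℕ))| / dist q (x (i:ℕ)) := by
          rw [hgval]; field_simp
        rw [this]
        exact le_lipNorm hkey q (x (i:ℕ)) hq1
    · -- upper bound
      rw [one_mul]
      exact lipNorm_le hL0 hkey
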